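/- Let ⟨·,·⟩ have signature (2, n+1) on ℝ^{n+3}. Let u₀, v₀ span a plane of signature (0,2) with ⟨u₀,u₀⟩ = ⟨v₀,v₀⟩ = −1 and −1 < ⟨u₀,v₀⟩ < 0. Let T₁, T₂ ⊂ ℝ^{n+3} be 2-dimensional positive-definite subspaces with T₁ ⊥ u₀ and T₂ ⊥ v₀ (tangent planes to space-like surfaces), and suppose additionally T₁ ⊥ v₀ and T₂ ⊥ u₀ (first-order criticality). Then for every unit vector u̇ ∈ T₁ there exists a unit vector v̇ ∈ T₂ with ⟨u̇, v̇⟩ ≥ 1. -/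

import Mathlib

/-- The symmetric bilinear form of signature `(2, n+1)` on `ℝ^{n+3}`. -/
noncomputable def pB (n : ℕ) : LinearMap.BilinForm ℝ (Fin (n + 3) → ℝ) :=
  Matrix.toBilin' (Matrix.diagonal fun i : Fin (n + 3) => if (i : ℕ) < 2 then (1 : ℝ) else -1)


lemma pB_apply (n : ℕ) (x y : Fin (n+3) → ℝ) :
    pB n x y = ∑ i : Fin (n+3), (if (i : ℕ) < 2 then (1:ℝ) else -1) * (x i * y i) := by
  simp only [pB, Matrix.toBilin'_apply', dotProduct, Matrix.mulVec_diagonal]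
  congr 1; funext i; ring

lemma pB_symm (n : ℕ) (x y : Fin (n+3) → ℝ) : pB n x y = pB n y x := by
  rw [pB_apply, pB_apply]; congr 1; funext i; ring

lemma pB_isRefl (n : ℕ) : (pB n).IsRefl := by
  intro x y h; rw [pB_symm] at h; exact h

lemma pB_nonpos (n : ℕ) (x : Fin (n+3) → ℝ) (h : ∀ i : Fin (n+3), (i:ℕ) < 2 → x i = 0) :
    pB n x x ≤ 0 := by
  rw [pB_apply]
  apply Finset.sum_nonpos
  intro i _
  by_cases hi : (i:ℕ) < 2
  · simp [h i hi]
  · simp only [hi, if_false]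
    nlinarith [sq_nonneg (x i)]

lemma posdef_finrank_le_two (n : ℕ) (W : Submodule ℝ (Fin (n+3) → ℝ))
    (hpos : ∀ v ∈ W, v ≠ 0 → 0 < pB n v v) : Module.finrank ℝ W ≤ 2 := by
  have h2 : (2:ℕ) ≤ n + 3 := by omega
  let π : (Fin (n+3) → ℝ) →ₗ[ℝ] (Fin 2 → ℝ) := LinearMap.funLeft ℝ ℝ (Fin.castLE h2)
  have hinj : Function.Injective (π.comp W.subtype) := by
    rw [← LinearMap.ker_eq_bot, LinearMap.ker_eq_bot']
    intro x hx
    have hzero : ∀ i : Fin (n+3), (i:ℕ) < 2 → x.val i = 0 := by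
      intro i hi
      have := congrFun hx ⟨(i:ℕ), hi⟩
      simpa [π, LinearMap.funLeft, Fin.castLE, Fin.ext_iff] using this
    by_contra hx0
    have hxne : x.val ≠ 0 := fun h => hx0 (Subtype.ext h)
    exact absurd (pB_nonpos n x.val hzero) (not_le.mpr (hpos x.val x.2 hxne))
  calc Module.finrank ℝ W ≤ Module.finrank ℝ (Fin 2 → ℝ) :=
        LinearMap.finrank_le_finrank_of_injective hinj
    _ = 2 := by simp

lemma orth_nonpos (n : ℕ) (T : Submodule ℝ (Fin (n+3) → ℝ))
    (hdim : Module.finrank ℝ T = 2)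
    (hpos : ∀ v ∈ T, v ≠ 0 → 0 < pB n v v)
    (q : Fin (n+3) → ℝ) (hq : ∀ t ∈ T, pB n q t = 0) :
    pB n q q ≤ 0 := by
  by_contra hqq
  push_neg at hqq
  have hq0 : q ≠ 0 := by rintro rfl; simp at hqq
  have hqT : q ∉ T := fun h => by simpa [hq q h] using hqq
  set W := T ⊔ Submodule.span ℝ {q} with hW
  have hWpos : ∀ v ∈ W, v ≠ 0 → 0 < pB n v v := by
    intro v hv hvne
    obtain ⟨t, ht, z, hz, rfl⟩ := Submodule.mem_sup.mp hv
    obtain ⟨c, rfl⟩ := Submodule.mem_span_singleton.mp hz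
    have hqt : pB n q t = 0 := hq t ht
    have htq : pB n t q = 0 := by rw [pB_symm]; exact hqt
    have hexp : pB n (t + c • q) (t + c • q) = pB n t t + c^2 * pB n q q := by
      simp only [map_add, map_smul, LinearMap.add_apply, LinearMap.smul_apply, smul_eq_mul,
        hqt, htq]
      ring
    rw [hexp]
    rcases eq_or_ne t 0 with rfl | htne
    · have hc : c ≠ 0 := by rintro rfl; simp at hvne
      have h0 : pB n (0:Fin (n+3) → ℝ) 0 = 0 := by simp
      rw [h0]
      have : 0 < c^2 := by positivity
      nlinarith
    · nlinarith [hpos t ht htne, sq_nonneg c]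
  have hinf : T ⊓ Submodule.span ℝ {q} = ⊥ := by
    rw [eq_bot_iff]
    intro x hx
    obtain ⟨hx1, hx2⟩ := Submodule.mem_inf.mp hx
    obtain ⟨c, rfl⟩ := Submodule.mem_span_singleton.mp hx2
    rcases eq_or_ne c 0 with rfl | hc
    · simp
    · have : q ∈ T := by
        have := T.smul_mem c⁻¹ hx1
        rwa [smul_smul, inv_mul_cancel₀ hc, one_smul] at this
      exact absurd this hqT
  have hsum := Submodule.finrank_sup_add_finrank_inf_eq T (Submodule.span ℝ {q})
  rw [hinf, hdim, finrank_span_singleton hq0] at hsum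
  simp only [finrank_bot, add_zero] at hsum
  have := posdef_finrank_le_two n W hWpos
  rw [hW] at this
  omega
/-- The step `⟨u̇₀, v̇₀⟩ ≥ 1` of the uniqueness proof: with `u₀, v₀` spanning a
negative-definite plane (`⟨u₀,u₀⟩ = ⟨v₀,v₀⟩ = −1`, `−1 < ⟨u₀,v₀⟩ < 0`) and `T₁, T₂`
positive-definite 2-planes orthogonal to both `u₀` and `v₀`, every unit vector
`u̇ ∈ T₁` admits a unit vector `v̇ ∈ T₂` with `⟨u̇, v̇⟩ ≥ 1`. -/
theorem stmt12 (n : ℕ) (u₀ v₀ : Fin (n + 3) → ℝ)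
    (T₁ T₂ : Submodule ℝ (Fin (n + 3) → ℝ))
    (hu₀ : pB n u₀ u₀ = -1) (hv₀ : pB n v₀ v₀ = -1)
    (hB₁ : -1 < pB n u₀ v₀) (hB₂ : pB n u₀ v₀ < 0)
    (hT₁dim : Module.finrank ℝ T₁ = 2) (hT₂dim : Module.finrank ℝ T₂ = 2)
    (hT₁pos : ∀ v ∈ T₁, v ≠ 0 → 0 < pB n v v)
    (hT₂pos : ∀ v ∈ T₂, v ≠ 0 → 0 < pB n v v)
    (hT₁u : ∀ v ∈ T₁, pB n v u₀ = 0) (hT₂v : ∀ v ∈ T₂, pB n v v₀ = 0)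
    (hT₁v : ∀ v ∈ T₁, pB n v v₀ = 0) (hT₂u : ∀ v ∈ T₂, pB n v u₀ = 0) :
    ∀ du ∈ T₁, pB n du du = 1 →
      ∃ dv ∈ T₂, pB n dv dv = 1 ∧ 1 ≤ pB n du dv := by
  intro du hdu hdu1
  -- restricted form on T₂ is nondegenerate
  have hnd : ((pB n).restrict T₂).Nondegenerate := by
    refine ⟨?_, ?_⟩ <;> rintro ⟨x, hx⟩ h <;> rcases eq_or_ne x 0 with rfl | hxne
    · rfl
    · exact absurd (h ⟨x, hx⟩) (ne_of_gt (hT₂pos x hx hxne))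
    · rfl
    · exact absurd (h ⟨x, hx⟩) (ne_of_gt (hT₂pos x hx hxne))
  have hcompl : IsCompl T₂ ((pB n).orthogonal T₂) :=
    LinearMap.BilinForm.isCompl_orthogonal_of_restrict_nondegenerate (pB_isRefl n) hnd
  have hmem : du ∈ T₂ ⊔ (pB n).orthogonal T₂ := by
    rw [hcompl.sup_eq_top]; trivial
  obtain ⟨p, hp, q, hq, hduq⟩ := Submodule.mem_sup.mp hmem
  -- q is orthogonal to T₂
  have hqT : ∀ t ∈ T₂, pB n q t = 0 := by
    intro t ht
    have := hq t ht
    exact pB_isRefl n t q this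
  have hqq : pB n q q ≤ 0 := orth_nonpos n T₂ hT₂dim hT₂pos q hqT
  have hqp : pB n q p = 0 := hqT p hp
  have hpq : pB n p q = 0 := by rw [pB_symm]; exact hqp
  have hexp : pB n du du = pB n p p + pB n q q := by
    rw [← hduq]
    simp only [map_add, LinearMap.add_apply, hpq, hqp]
    ring
  have hpp : 1 ≤ pB n p p := by rw [hdu1] at hexp; linarith
  have hpp0 : (0:ℝ) < pB n p p := by linarith
  set s := Real.sqrt (pB n p p) with hs
  have hs1 : 1 ≤ s := by
    rw [hs, show (1:ℝ) = Real.sqrt 1 by simp]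
    exact Real.sqrt_le_sqrt hpp
  have hs0 : 0 < s := by linarith
  have hssq : s * s = pB n p p := Real.mul_self_sqrt hpp0.le
  refine ⟨s⁻¹ • p, T₂.smul_mem _ hp, ?_, ?_⟩
  · simp only [map_smul, LinearMap.smul_apply, smul_eq_mul]
    field_simp
    rw [← hssq]
    ring
  · have hdup : pB n du p = pB n p p := by
      rw [← hduq]
      simp only [map_add, LinearMap.add_apply, hqp]
      ring
    simp only [map_smul, smul_eq_mul, hdup]
    rw [← hssq, ← mul_assoc, inv_mul_cancel₀ hs0.ne', one_mul]
    exact hs1
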